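/- Let n > m ≥ 2 be integers, let A_1, …, A_{m−1} be a skew Clifford system on ℝ^{n+1}, set c = (m−1)/(n−1) and F(x,y) = ⟨x,y⟩² + Σ_{q=1}^{m−1} ⟨A_q x, y⟩². Suppose ‖x‖ = ‖y‖ = 1 and F(x,y) = c, and write B_p = ⟨A_p x, y⟩. Then for all real numbers r, s, t: ‖r x + t(⟨x,y⟩ y + Σ_p B_p A_pᵀ y)‖² = r² + 2rtc + t²c and ‖s y + t(⟨x,y⟩ x + Σ_p B_p A_p x)‖² = s² + 2stc + t²c. -/

import Mathlib

open Matrix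
open scoped RealInnerProductSpace BigOperators

noncomputable section

/-- A skew Clifford system `A_1, …, A_{m-1}` on `ℝ^N`: skew-symmetric matrices with
`A_p A_q + A_q A_p = -2 δ_{pq} Id`. -/
def IsSkewCliffordSystem {N m : ℕ} (A : Fin (m - 1) → Matrix (Fin N) (Fin N) ℝ) : Prop :=
  (∀ p q, A p * A q + A q * A p =
      if p = q then (-2 : ℝ) • (1 : Matrix (Fin N) (Fin N) ℝ) else 0) ∧
  (∀ p, (A p)ᵀ = -A p)

/-- The action of a matrix on Euclidean space. -/
def act {N : ℕ} (A : Matrix (Fin N) (Fin N) ℝ) (x : EuclideanSpace ℝ (Fin N)) :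
    EuclideanSpace ℝ (Fin N) :=
  Matrix.toEuclideanLin A x

/-- The splitting form of the FKM isoparametric polynomial:
`F(x,y) = ⟨x,y⟩² + Σ_q ⟨A_q x, y⟩²`. -/
def FKM {N m : ℕ} (A : Fin (m - 1) → Matrix (Fin N) (Fin N) ℝ)
    (x y : EuclideanSpace ℝ (Fin N)) : ℝ :=
  ⟪x, y⟫ ^ 2 + ∑ q, ⟪act (A q) x, y⟫ ^ 2

lemma inner_act {N : ℕ} (M : Matrix (Fin N) (Fin N) ℝ) (v w : EuclideanSpace ℝ (Fin N)) :
    ⟪act M v, w⟫ = ⟪v, act Mᵀ w⟫ := by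
  simp only [act, Matrix.toEuclideanLin_apply, PiLp.inner_apply, RCLike.inner_apply,
    starRingEnd_apply, star_trivial]
  simp only [PiLp.toLp_apply, Matrix.mulVec,
    dotProduct, Matrix.transpose_apply, Finset.sum_mul, Finset.mul_sum]
  rw [Finset.sum_comm]
  congr 1; ext i; congr 1; ext j; ring

lemma act_mul {N : ℕ} (M P : Matrix (Fin N) (Fin N) ℝ) (v : EuclideanSpace ℝ (Fin N)) :
    act (M * P) v = act M (act P v) := by
  simp [act, Matrix.toEuclideanLin_apply, Matrix.mulVec_mulVec]

lemma act_neg {N : ℕ} (M : Matrix (Fin N) (Fin N) ℝ) (v : EuclideanSpace ℝ (Fin N)) :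
    act (-M) v = -act M v := by
  simp [act]

lemma act_add {N : ℕ} (M P : Matrix (Fin N) (Fin N) ℝ) (v : EuclideanSpace ℝ (Fin N)) :
    act (M + P) v = act M v + act P v := by
  simp [act]

lemma act_smul_mat {N : ℕ} (a : ℝ) (M : Matrix (Fin N) (Fin N) ℝ) (v : EuclideanSpace ℝ (Fin N)) :
    act (a • M) v = a • act M v := by
  simp [act]

lemma act_one {N : ℕ} (v : EuclideanSpace ℝ (Fin N)) :
    act (1 : Matrix (Fin N) (Fin N) ℝ) v = v := by
  simp [act, Matrix.toEuclideanLin_apply, Matrix.one_mulVec]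

lemma act_zero {N : ℕ} (v : EuclideanSpace ℝ (Fin N)) :
    act (0 : Matrix (Fin N) (Fin N) ℝ) v = 0 := by
  simp [act, Matrix.toEuclideanLin_apply]

lemma skew_inner {N : ℕ} {M : Matrix (Fin N) (Fin N) ℝ} (hM : Mᵀ = -M)
    (v : EuclideanSpace ℝ (Fin N)) : ⟪act M v, v⟫ = 0 := by
  have h := inner_act M v v
  rw [hM, act_neg, inner_neg_right, real_inner_comm v (act M v)] at h
  rw [real_inner_comm]
  linarith

lemma key_norm {N : ℕ} (w u : EuclideanSpace ℝ (Fin N)) (c r t : ℝ) (hw : ‖w‖ = 1)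
    (h1 : ⟪w, u⟫ = c) (h2 : ⟪u, u⟫ = c) :
    ‖r • w + t • u‖ ^ 2 = r ^ 2 + 2 * r * t * c + t ^ 2 * c := by
  rw [norm_add_sq_real, real_inner_smul_left, real_inner_smul_right, h1,
    norm_smul, norm_smul]
  have hu : ‖u‖ ^ 2 = c := by rw [← real_inner_self_eq_norm_sq, h2]
  rw [mul_pow, mul_pow, hw]
  rw [Real.norm_eq_abs, Real.norm_eq_abs, sq_abs, sq_abs, hu]
  ring

/-- with `c = (m−1)/(n−1)`, `‖x‖ = ‖y‖ = 1`, `F(x,y) = c` and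
`B_p = ⟨A_p x, y⟩`, for all reals `r, s, t`:
`‖r x + t(⟨x,y⟩ y + Σ_p B_p A_pᵀ y)‖² = r² + 2rtc + t²c` and
`‖s y + t(⟨x,y⟩ x + Σ_p B_p A_p x)‖² = s² + 2stc + t²c`. -/
theorem stmt9 (n m : ℕ) (hm : 2 ≤ m) (hmn : m < n)
    (A : Fin (m - 1) → Matrix (Fin (n + 1)) (Fin (n + 1)) ℝ)
    (hA : IsSkewCliffordSystem A)
    (c : ℝ) (hc : c = ((m : ℝ) - 1) / ((n : ℝ) - 1))
    (x y : EuclideanSpace ℝ (Fin (n + 1))) (hx : ‖x‖ = 1) (hy : ‖y‖ = 1)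
    (hF : FKM A x y = c) (r s t : ℝ) :
    ‖r • x + t • (⟪x, y⟫ • y + ∑ p, ⟪act (A p) x, y⟫ • act (A p)ᵀ y)‖ ^ 2 =
        r ^ 2 + 2 * r * t * c + t ^ 2 * c ∧
    ‖s • y + t • (⟪x, y⟫ • x + ∑ p, ⟪act (A p) x, y⟫ • act (A p) x)‖ ^ 2 =
        s ^ 2 + 2 * s * t * c + t ^ 2 * c := by
  obtain ⟨hClif, hSkew⟩ := hA
  set a : ℝ := ⟪x, y⟫ with ha
  set B : Fin (m - 1) → ℝ := fun p => ⟪act (A p) x, y⟫ with hB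
  have hFc : a ^ 2 + ∑ p, (B p) ^ 2 = c := hF
  -- orthogonality of the A_p v for a fixed unit vector v
  have ortho : ∀ (v : EuclideanSpace ℝ (Fin (n + 1))), ‖v‖ = 1 → ∀ p q,
      ⟪act (A p) v, act (A q) v⟫ = if p = q then (1 : ℝ) else 0 := by
    intro v hv p q
    have h1 : ⟪act (A p) v, act (A q) v⟫ = -⟪v, act (A p * A q) v⟫ := by
      rw [inner_act, hSkew, act_neg, inner_neg_right, act_mul]
    have h2 : ⟪act (A q) v, act (A p) v⟫ = -⟪v, act (A q * A p) v⟫ := by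
      rw [inner_act, hSkew, act_neg, inner_neg_right, act_mul]
    have hsym : ⟪act (A p) v, act (A q) v⟫ = ⟪act (A q) v, act (A p) v⟫ :=
      real_inner_comm _ _
    have hsum : ⟪v, act (A p * A q) v⟫ + ⟪v, act (A q * A p) v⟫ =
        if p = q then (-2 : ℝ) * ⟪v, v⟫ else 0 := by
      rw [← inner_add_right, ← act_add, hClif p q]
      split
      · rw [act_smul_mat, act_one, real_inner_smul_right]
      · rw [act_zero, inner_zero_right]
    have hvv : ⟪v, v⟫ = 1 := by
      rw [real_inner_self_eq_norm_sq, hv]; norm_num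
    rw [hvv] at hsum
    split at hsum <;> split <;> first | linarith | simp_all
  have hAy : ∀ p, ⟪x, act (A p)ᵀ y⟫ = B p := fun p => (inner_act (A p) x y).symm
  constructor
  · set u := a • y + ∑ p, B p • act (A p)ᵀ y with hu
    refine key_norm x u c r t hx ?_ ?_
    · rw [hu, inner_add_right, real_inner_smul_right, inner_sum]
      simp only [real_inner_smul_right, hAy]
      rw [← ha, ← hFc]; ring_nf
    · rw [hu, inner_add_left, inner_add_right, inner_add_right]
      have hyy : ⟪y, y⟫ = (1 : ℝ) := by
        rw [real_inner_self_eq_norm_sq, hy]; norm_num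
      have hcross : ∀ p, ⟪y, act (A p)ᵀ y⟫ = 0 := by
        intro p
        rw [hSkew, act_neg, inner_neg_right, real_inner_comm,
          skew_inner (hSkew p) y, neg_zero]
      have h11 : ⟪a • y, a • y⟫ = a ^ 2 := by
        rw [real_inner_smul_left, real_inner_smul_right, hyy]; ring
      have h12 : ⟪a • y, ∑ p, B p • act (A p)ᵀ y⟫ = 0 := by
        rw [real_inner_smul_left, inner_sum]
        simp only [real_inner_smul_right, hcross]
        simp
      have h21 : ⟪∑ p, B p • act (A p)ᵀ y, a • y⟫ = 0 := by
        rw [real_inner_comm]; exact h12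
      have h22 : ⟪∑ p, B p • act (A p)ᵀ y, ∑ p, B p • act (A p)ᵀ y⟫ =
          ∑ p, (B p) ^ 2 := by
        rw [sum_inner]
        refine Finset.sum_congr rfl fun p _ => ?_
        rw [real_inner_smul_left, inner_sum]
        simp only [real_inner_smul_right]
        have : ∀ q, ⟪act (A p)ᵀ y, act (A q)ᵀ y⟫ = if p = q then (1:ℝ) else 0 := by
          intro q
          rw [hSkew p, hSkew q, act_neg, act_neg, inner_neg_neg]
          exact ortho y hy p q
        simp only [this, mul_ite, mul_one, mul_zero, Finset.sum_ite_eq,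
          Finset.mem_univ, if_true]
        ring
      rw [h11, h12, h21, h22, ← hFc]; ring
  · set v := a • x + ∑ p, B p • act (A p) x with hv
    refine key_norm y v c s t hy ?_ ?_
    · rw [hv, inner_add_right, real_inner_smul_right, inner_sum]
      simp only [real_inner_smul_right]
      have : ∀ p, ⟪y, act (A p) x⟫ = B p := fun p => real_inner_comm _ _
      simp only [this]
      have hyx : ⟪y, x⟫ = a := by rw [real_inner_comm, ← ha]
      rw [hyx, ← hFc]; ring_nf
    · rw [hv, inner_add_left, inner_add_right, inner_add_right]
      have hxx : ⟪x, x⟫ = (1 : ℝ) := by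
        rw [real_inner_self_eq_norm_sq, hx]; norm_num
      have hcross : ∀ p, ⟪x, act (A p) x⟫ = 0 := by
        intro p; rw [real_inner_comm]; exact skew_inner (hSkew p) x
      have h11 : ⟪a • x, a • x⟫ = a ^ 2 := by
        rw [real_inner_smul_left, real_inner_smul_right, hxx]; ring
      have h12 : ⟪a • x, ∑ p, B p • act (A p) x⟫ = 0 := by
        rw [real_inner_smul_left, inner_sum]
        simp only [real_inner_smul_right, hcross]
        simp
      have h21 : ⟪∑ p, B p • act (A p) x, a • x⟫ = 0 := by
        rw [real_inner_comm]; exact h12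
      have h22 : ⟪∑ p, B p • act (A p) x, ∑ p, B p • act (A p) x⟫ =
          ∑ p, (B p) ^ 2 := by
        rw [sum_inner]
        refine Finset.sum_congr rfl fun p _ => ?_
        rw [real_inner_smul_left, inner_sum]
        simp only [real_inner_smul_right, ortho x hx p]
        simp only [mul_ite, mul_one, mul_zero, Finset.sum_ite_eq,
          Finset.mem_univ, if_true]
        ring
      rw [h11, h12, h21, h22, ← hFc]; ring
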